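/- For n agents all at distinct positions with x₂ = x₁ + b and xᵢ - b > x₂ + b for i ≥ 3, under the mechanism outputting x₁ + b, agent 2 has cost b + c, but if agent 2 reports x₂' = x₁ - b (making her the leftmost agent), the output becomes x₁ and her true cost is c < b + c; hence the mechanism outputting the right peak of the leftmost agent is not strategyproof. -/

import Mathlib

noncomputable def cost (b c y x : ℝ) : ℝ := c + min |x - b - y| |x + b - y|

theorem stmt_19 (b c : ℝ) (hb : 0 < b) (hc : 0 < c) (n : ℕ)
    (x : Fin (n + 2) → ℝ)
    (hmin : ∀ i, x 0 ≤ x i)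
    (h2 : x 1 = x 0 + b)
    (hrest : ∀ i : Fin (n + 2), 2 ≤ (i : ℕ) → x 1 + b < x i - b) :
    -- the mechanism outputting (min report) + b gives agent 2 cost b + c
    Finset.univ.inf' Finset.univ_nonempty x + b = x 0 + b ∧
    cost b c (x 0 + b) (x 1) = b + c ∧
    -- if agent 2 misreports x 0 - b, the output becomes x 0
    Finset.univ.inf' Finset.univ_nonempty (Function.update x 1 (x 0 - b)) + b = x 0 ∧
    cost b c (x 0) (x 1) = c ∧
    cost b c (x 0) (x 1) < cost b c (x 0 + b) (x 1) := by
  have hinf1 : Finset.univ.inf' Finset.univ_nonempty x = x 0 :=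
    le_antisymm (Finset.inf'_le _ (Finset.mem_univ 0))
      (Finset.le_inf' _ _ fun i _ => hmin i)
  have hinf2 : Finset.univ.inf' Finset.univ_nonempty (Function.update x 1 (x 0 - b)) = x 0 - b := by
    refine le_antisymm ?_ (Finset.le_inf' _ _ fun i _ => ?_)
    · have := Finset.inf'_le (b := (1 : Fin (n+2))) (Function.update x 1 (x 0 - b))
        (Finset.mem_univ 1)
      exact le_of_le_of_eq this (by simp)
    · rcases eq_or_ne i 1 with rfl | hi
      · simp
      · rw [Function.update_of_ne hi]
        linarith [hmin i]
  have hc1 : cost b c (x 0 + b) (x 1) = b + c := by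
    unfold cost
    rw [h2]
    have : x 0 + b - b - (x 0 + b) = -b := by ring
    rw [this]
    have : x 0 + b + b - (x 0 + b) = b := by ring
    rw [this, abs_neg, min_self, abs_of_pos hb]
    ring
  have hc2 : cost b c (x 0) (x 1) = c := by
    unfold cost
    rw [h2]
    have h1 : x 0 + b - b - x 0 = 0 := by ring
    have h2' : x 0 + b + b - x 0 = 2 * b := by ring
    rw [h1, h2', abs_zero]
    have : min 0 |2 * b| = 0 := min_eq_left (abs_nonneg _)
    rw [this]; ring
  refine ⟨by rw [hinf1], hc1, by rw [hinf2]; ring, hc2, by rw [hc1, hc2]; linarith⟩
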